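/- Let d ∈ {0,…,n}, let e¹,…,eⁿ be a basis of ℝⁿ, let U = span{e¹,…,e^d}, let K = {e¹,…,eⁿ, -(1/(2n))∑ᵢeⁱ} and L = {-e^(d+1),…,-eⁿ, (1/(2n))∑ᵢeⁱ}. Then the point u = (1/(3n-d))∑_{i=1}^d eⁱ is the unique point of conv(K) ∩ conv(L) ∩ U, and for all proper subsets K' ⊆ K, L' ⊆ L with |K'| + |L'| < 2(n+1) - d one has conv(K') ∩ conv(L') ∩ U = ∅. -/

import Mathlib

open Finset

namespace Stmt7Aux

variable {n : ℕ} (d : ℕ) (e : Module.Basis (Fin n) ℝ (EuclideanSpace ℝ (Fin n)))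

noncomputable def sp : EuclideanSpace ℝ (Fin n) := (1 / (2 * n : ℝ)) • ∑ i, e i

noncomputable def uu : EuclideanSpace ℝ (Fin n) :=
  (1 / (3 * n - d : ℝ)) • ∑ i ∈ Finset.univ.filter (fun i : Fin n => (i : ℕ) < d), e i

open scoped Classical in
noncomputable def Lfin : Finset (EuclideanSpace ℝ (Fin n)) :=
  (Finset.univ.filter (fun i : Fin n => d ≤ (i : ℕ))).image (fun i => -e i) ∪ {sp e}

open scoped Classical in
noncomputable def Kfin : Finset (EuclideanSpace ℝ (Fin n)) :=
  Finset.univ.image (fun i => e i) ∪ {-sp e}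

lemma repr_sp (j : Fin n) : e.repr (sp e) j = 1 / (2 * n) := by
  simp [sp, map_sum, Finsupp.single_apply]

lemma sp_ne (hn : 0 < n) (i : Fin n) : sp e ≠ -e i := by
  intro h
  have := congrArg (fun x => e.repr x i) h
  simp [repr_sp] at this
  have h2 : (0:ℝ) < (n:ℝ) := by positivity
  have h3 : (0:ℝ) < (n:ℝ)⁻¹ := by positivity
  nlinarith

lemma neg_sp_ne (hn : 0 < n) (i : Fin n) : -sp e ≠ e i := by
  intro h
  have := congrArg (fun x => e.repr x i) h
  simp [repr_sp] at this
  have h2 : (0:ℝ) < (n:ℝ) := by positivity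
  have h3 : (0:ℝ) < (n:ℝ)⁻¹ := by positivity
  nlinarith

lemma sum_Lfin (hn : 0 < n) {M : Type*} [AddCommMonoid M] (f : EuclideanSpace ℝ (Fin n) → M) :
    ∑ y ∈ Lfin d e, f y
      = ∑ i ∈ Finset.univ.filter (fun i : Fin n => d ≤ (i : ℕ)), f (-e i) + f (sp e) := by
  classical
  rw [Lfin, Finset.sum_union, Finset.sum_image, Finset.sum_singleton]
  · intro i _ j _ h
    exact e.injective (by simpa using neg_injective h)
  · simp only [Finset.disjoint_singleton_right, Finset.mem_image]
    rintro ⟨i, -, h⟩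
    exact sp_ne e hn i h.symm

lemma sum_Kfin (hn : 0 < n) {M : Type*} [AddCommMonoid M] (f : EuclideanSpace ℝ (Fin n) → M) :
    ∑ y ∈ Kfin e, f y = ∑ i, f (e i) + f (-sp e) := by
  classical
  rw [Kfin, Finset.sum_union, Finset.sum_image, Finset.sum_singleton]
  · intro i _ j _ h; exact e.injective h ▸ rfl
  · simp only [Finset.disjoint_singleton_right, Finset.mem_image]
    rintro ⟨i, -, h⟩
    exact neg_sp_ne e hn i h.symm


lemma repr_uu (hn : 0 < n) (hd : d ≤ n) (j : Fin n) :
    e.repr (uu d e) j = if (j : ℕ) < d then (1 / (3 * (n:ℝ) - d)) else 0 := by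
  classical
  simp [uu, map_sum, Finsupp.single_apply]

lemma repr_Lcomb (hn : 0 < n) (w : EuclideanSpace ℝ (Fin n) → ℝ) (j : Fin n) :
    e.repr (∑ y ∈ Lfin d e, w y • y) j
      = (if d ≤ (j : ℕ) then -(w (-e j)) else 0) + w (sp e) * (1 / (2 * n)) := by
  classical
  rw [sum_Lfin d e hn (fun y => w y • y)]
  simp only [map_add, map_sum, map_smul, Finsupp.coe_add, Finsupp.coe_finset_sum,
    Finsupp.coe_smul, Pi.add_apply, Finset.sum_apply, Pi.smul_apply, smul_eq_mul]
  rw [repr_sp]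
  congr 1
  have : ∀ i : Fin n, w (-e i) * (e.repr (-e i)) j
      = if i = j then -(w (-e i)) else 0 := by
    intro i
    simp [Finsupp.single_apply, mul_ite]
    split <;> simp
  rw [Finset.sum_congr rfl (fun i _ => this i)]
  rw [Finset.sum_ite_eq' (Finset.univ.filter (fun i : Fin n => d ≤ (i : ℕ))) j
    (fun i => -(w (-e i)))]
  simp

lemma repr_Kcomb (hn : 0 < n) (w : EuclideanSpace ℝ (Fin n) → ℝ) (j : Fin n) :
    e.repr (∑ y ∈ Kfin e, w y • y) j
      = w (e j) - w (-sp e) * (1 / (2 * n)) := by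
  classical
  rw [sum_Kfin e hn (fun y => w y • y)]
  simp only [map_add, map_sum, map_smul, Finsupp.coe_add, Finsupp.coe_finset_sum,
    Finsupp.coe_smul, Pi.add_apply, Finset.sum_apply, Pi.smul_apply, smul_eq_mul]
  have hsp : (e.repr (-sp e)) j = -(1/(2*n)) := by
    rw [map_neg]; simp [repr_sp]
  rw [hsp]
  have : ∀ i : Fin n, w (e i) * (e.repr (e i)) j = if i = j then w (e i) else 0 := by
    intro i; simp [Finsupp.single_apply, mul_ite]
  rw [Finset.sum_congr rfl (fun i _ => this i)]
  rw [Finset.sum_ite_eq' Finset.univ j (fun i => w (e i))]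
  simp; ring

lemma memU_iff (x : EuclideanSpace ℝ (Fin n)) :
    x ∈ Submodule.span ℝ ((fun i => e i) '' {i | (i : ℕ) < d}) ↔
      ∀ j : Fin n, d ≤ (j : ℕ) → e.repr x j = 0 := by
  classical
  constructor
  · intro hx j hj
    have hker : Submodule.span ℝ ((fun i => e i) '' {i | (i : ℕ) < d})
        ≤ LinearMap.ker (e.coord j) := by
      rw [Submodule.span_le]
      rintro y ⟨i, hi, rfl⟩
      simp only [SetLike.mem_coe, LinearMap.mem_ker, Module.Basis.coord_apply, Module.Basis.repr_self]
      rw [Finsupp.single_apply]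
      simp only [Set.mem_setOf_eq] at hi
      have : i ≠ j := by intro h; subst h; omega
      simp [this]
    have := hker hx
    simpa using this
  · intro h
    have hx : x = ∑ j ∈ Finset.univ.filter (fun j : Fin n => (j : ℕ) < d),
        e.repr x j • e j := by
      conv_lhs => rw [← e.sum_repr x]
      rw [← Finset.sum_filter_add_sum_filter_not Finset.univ (fun j : Fin n => (j : ℕ) < d)]
      have : ∀ j ∈ Finset.univ.filter (fun j : Fin n => ¬ (j : ℕ) < d),
          e.repr x j • e j = 0 := by
        intro j hj
        simp only [Finset.mem_filter, not_lt] at hj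
        rw [h j hj.2, zero_smul]
      rw [Finset.sum_congr rfl this]
      simp
    rw [hx]
    exact Submodule.sum_mem _ fun j hj => Submodule.smul_mem _ _
      (Submodule.subset_span ⟨j, by simpa using (Finset.mem_filter.mp hj).2, rfl⟩)

lemma card_filter_lt (hd : d ≤ n) :
    (Finset.univ.filter (fun i : Fin n => (i : ℕ) < d)).card = d := by
  rw [Finset.card_filter, Fin.sum_univ_eq_sum_range (fun i => if i < d then 1 else 0),
    ← Finset.card_filter]
  have : (Finset.range n).filter (fun i => i < d) = Finset.range d := by
    ext i; simp; omega
  rw [this, Finset.card_range]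

lemma card_filter_ge (hd : d ≤ n) :
    (Finset.univ.filter (fun i : Fin n => d ≤ (i : ℕ))).card = n - d := by
  have h1 := Finset.card_filter_add_card_filter_not
    (s := (Finset.univ : Finset (Fin n))) (p := fun i : Fin n => (i : ℕ) < d)
  simp only [not_lt] at h1
  rw [card_filter_lt d hd] at h1
  simp only [Finset.card_univ, Fintype.card_fin] at h1
  omega

lemma denom_pos (hn : 0 < n) (hd : d ≤ n) : (0:ℝ) < 3 * n - d := by
  have h1 : (d:ℝ) ≤ n := by exact_mod_cast hd
  have h2 : (0:ℝ) < n := by exact_mod_cast hn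
  linarith

lemma keyL (hn : 0 < n) (hd : d ≤ n) (w : EuclideanSpace ℝ (Fin n) → ℝ)
    (x : EuclideanSpace ℝ (Fin n))
    (h0 : ∀ y ∈ Lfin d e, 0 ≤ w y) (h1 : ∑ y ∈ Lfin d e, w y = 1)
    (hx : ∑ y ∈ Lfin d e, w y • y = x)
    (hxU : ∀ j : Fin n, d ≤ (j : ℕ) → e.repr x j = 0) :
    x = uu d e ∧ ∀ y ∈ Lfin d e, 0 < w y := by
  classical
  have hden := denom_pos d hn hd
  have h2n : (0:ℝ) < 2 * n := by positivity
  have hdn : (d:ℝ) ≤ n := by exact_mod_cast hd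
  set τ := w (sp e) with hτdef
  -- coordinate equations
  have hcoord : ∀ j : Fin n, e.repr x j
      = (if d ≤ (j : ℕ) then -(w (-e j)) else 0) + τ * (1 / (2 * n)) := by
    intro j; rw [← hx, repr_Lcomb d e hn w j]
  have hν : ∀ j : Fin n, d ≤ (j : ℕ) → w (-e j) = τ * (1 / (2 * n)) := by
    intro j hj
    have := hcoord j
    rw [hxU j hj, if_pos hj] at this
    linarith
  -- sum equation
  have hsum : ∑ i ∈ Finset.univ.filter (fun i : Fin n => d ≤ (i : ℕ)), w (-e i) + τ = 1 := by
    rw [← h1, sum_Lfin d e hn w]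
  have hsum2 : ((n - d : ℕ) : ℝ) * (τ * (1 / (2 * n))) + τ = 1 := by
    have hs' : ∑ i ∈ Finset.univ.filter (fun i : Fin n => d ≤ (i : ℕ)), w (-e i)
        = ((n - d : ℕ) : ℝ) * (τ * (1 / (2 * n))) := by
      rw [Finset.sum_congr rfl (fun i hi => hν i (Finset.mem_filter.mp hi).2),
        Finset.sum_const, card_filter_ge d hd, nsmul_eq_mul]
    rw [← hs']
    exact hsum
  have hcast : ((n - d : ℕ) : ℝ) = (n:ℝ) - d := by
    rw [Nat.cast_sub hd]
  rw [hcast] at hsum2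
  have h3 : τ * (3 * (n:ℝ) - d) = 2 * n := by
    field_simp at hsum2
    linear_combination hsum2
  have hτval : τ = 2 * n / (3 * n - d) := by
    rw [eq_div_iff hden.ne']
    linear_combination h3
  have hτpos : 0 < τ := by rw [hτval]; positivity
  have hνval : ∀ j : Fin n, d ≤ (j : ℕ) → w (-e j) = 1 / (3 * (n:ℝ) - d) := by
    intro j hj
    rw [hν j hj, hτval]
    field_simp
    try ring
  constructor
  · apply e.repr.injective
    ext j
    rw [repr_uu d e hn hd j, hcoord j]
    by_cases hj : d ≤ (j : ℕ)
    · rw [if_pos hj, if_neg (by omega), hν j hj, hτval]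
      field_simp
      try ring
    · rw [if_neg hj, if_pos (by omega), hτval]
      field_simp
      try ring
  · intro y hy
    rw [Lfin, Finset.mem_union] at hy
    rcases hy with hy | hy
    · obtain ⟨i, hi, rfl⟩ := Finset.mem_image.mp hy
      rw [hνval i (by simpa using (Finset.mem_filter.mp hi).2)]
      positivity
    · rw [Finset.mem_singleton] at hy
      rw [hy]; exact hτpos

lemma keyK (hn : 0 < n) (hd : d ≤ n) (w : EuclideanSpace ℝ (Fin n) → ℝ)
    (h0 : ∀ y ∈ Kfin e, 0 ≤ w y) (h1 : ∑ y ∈ Kfin e, w y = 1)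
    (hx : ∑ y ∈ Kfin e, w y • y = uu d e) :
    ∀ y ∈ Kfin e, 0 < w y := by
  classical
  have hden := denom_pos d hn hd
  have h2n : (0:ℝ) < 2 * n := by positivity
  have hN : (0:ℝ) < n := by exact_mod_cast hn
  have hdn : (d:ℝ) ≤ n := by exact_mod_cast hd
  set μ := w (-sp e) with hμdef
  have hlam : ∀ j : Fin n, w (e j)
      = (if (j:ℕ) < d then 1/(3*(n:ℝ)-d) else 0) + μ * (1/(2*n)) := by
    intro j
    have h := repr_Kcomb e hn w j
    rw [hx, repr_uu d e hn hd j] at h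
    linarith [h]
  rw [sum_Kfin e hn w] at h1
  have hsumlam : ∑ i, w (e i)
      = (d:ℝ) * (1/(3*(n:ℝ)-d)) + (n:ℝ) * (μ * (1/(2*n))) := by
    rw [Finset.sum_congr rfl (fun i _ => hlam i), Finset.sum_add_distrib,
      Finset.sum_const, Finset.sum_ite, Finset.sum_const, Finset.sum_const_zero,
      add_zero, card_filter_lt d hd]
    simp [nsmul_eq_mul]
  rw [hsumlam] at h1
  have h5 : (n:ℝ) * (μ * (1/(2*n))) = μ/2 := by field_simp
  have h6 : (d:ℝ) * (1/(3*(n:ℝ)-d)) = d/(3*(n:ℝ)-d) := by ring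
  rw [h5, h6] at h1
  have h4 : (d:ℝ)/(3*(n:ℝ)-d) < 1 := (div_lt_one hden).2 (by linarith)
  have hμpos : 0 < μ := by linarith
  intro y hy
  rw [Kfin, Finset.mem_union] at hy
  rcases hy with hy | hy
  · obtain ⟨i, -, rfl⟩ := Finset.mem_image.mp hy
    rw [hlam i]
    have : (0:ℝ) ≤ (if (i:ℕ) < d then 1/(3*(n:ℝ)-d) else 0) := by
      split
      · positivity
      · exact le_refl 0
    nlinarith [this]
  · rw [Finset.mem_singleton] at hy
    rw [hy]; exact hμpos

open scoped Classical in
noncomputable def wL : EuclideanSpace ℝ (Fin n) → ℝ :=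
  fun y => if y = sp e then 2*(n:ℝ)/(3*(n:ℝ)-d) else 1/(3*(n:ℝ)-d)

lemma memL (hn : 0 < n) (hd : d ≤ n) : uu d e ∈ convexHull ℝ (↑(Lfin d e) : Set (EuclideanSpace ℝ (Fin n))) := by
  classical
  have hden := denom_pos d hn hd
  have h2n : (0:ℝ) < 2 * n := by positivity
  have hNd : ((n - d : ℕ) : ℝ) = (n:ℝ) - d := by rw [Nat.cast_sub hd]
  have hwLe : ∀ i : Fin n, wL d e (-e i) = 1/(3*(n:ℝ)-d) := by
    intro i
    rw [wL, if_neg (fun h => sp_ne e hn i h.symm)]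
  have hwLsp : wL d e (sp e) = 2*(n:ℝ)/(3*(n:ℝ)-d) := if_pos rfl
  have h1 : ∑ y ∈ Lfin d e, wL d e y = 1 := by
    rw [sum_Lfin d e hn (wL d e), Finset.sum_congr rfl (fun i _ => hwLe i),
      Finset.sum_const, card_filter_ge d hd, nsmul_eq_mul, hwLsp, hNd]
    field_simp
    rw [div_eq_iff (by linarith)]
    ring
  rw [Finset.convexHull_eq]
  refine ⟨wL d e, ?_, h1, ?_⟩
  · intro y hy
    rw [wL]
    split <;> positivity
  · rw [Finset.centerMass_eq_of_sum_1 _ id h1]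
    simp only [id]
    apply e.repr.injective
    ext j
    rw [repr_Lcomb d e hn (wL d e) j, repr_uu d e hn hd j, hwLsp, hwLe j]
    by_cases hj : d ≤ (j:ℕ)
    · rw [if_pos hj, if_neg (by omega)]
      field_simp
      try ring
    · rw [if_neg hj, if_pos (by omega)]
      field_simp
      try ring

open scoped Classical in
noncomputable def wK : EuclideanSpace ℝ (Fin n) → ℝ :=
  fun y => if y = -sp e then 2*(3*(n:ℝ)-2*d)/(3*(3*(n:ℝ)-d))
    else 2*(3*(n:ℝ)-2*d)/(3*(3*(n:ℝ)-d)) * (1/(2*(n:ℝ)))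
      + (1/(3*(n:ℝ)-d)) * ∑ j ∈ Finset.univ.filter (fun j : Fin n => (j:ℕ) < d), e.repr y j

lemma wK_apply_e (hn : 0 < n) (i : Fin n) :
    wK d e (e i) = 2*(3*(n:ℝ)-2*d)/(3*(3*(n:ℝ)-d)) * (1/(2*(n:ℝ)))
      + (if (i:ℕ) < d then 1/(3*(n:ℝ)-d) else 0) := by
  classical
  rw [wK, if_neg (neg_sp_ne e hn i).symm]
  congr 1
  have : ∀ j : Fin n, e.repr (e i) j = if j = i then 1 else 0 := by
    intro j; simp [Finsupp.single_apply, eq_comm]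
  rw [Finset.sum_congr rfl (fun j _ => this j),
    Finset.sum_ite_eq' (Finset.univ.filter (fun j : Fin n => (j:ℕ) < d)) i (fun _ => (1:ℝ))]
  simp [mul_ite]

lemma memK (hn : 0 < n) (hd : d ≤ n) : uu d e ∈ convexHull ℝ (↑(Kfin e) : Set (EuclideanSpace ℝ (Fin n))) := by
  classical
  have hden := denom_pos d hn hd
  have h2n : (0:ℝ) < 2 * n := by positivity
  have hN : (0:ℝ) < n := by exact_mod_cast hn
  have hdn : (d:ℝ) ≤ n := by exact_mod_cast hd
  have h32 : (0:ℝ) < 3*(n:ℝ)-2*d := by linarith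
  have hwKsp : wK d e (-sp e) = 2*(3*(n:ℝ)-2*d)/(3*(3*(n:ℝ)-d)) := if_pos rfl
  have h1 : ∑ y ∈ Kfin e, wK d e y = 1 := by
    rw [sum_Kfin e hn (wK d e), Finset.sum_congr rfl (fun i _ => wK_apply_e d e hn i),
      Finset.sum_add_distrib, Finset.sum_const, Finset.sum_ite, Finset.sum_const,
      Finset.sum_const_zero, add_zero, card_filter_lt d hd, hwKsp]
    simp only [Finset.card_univ, Fintype.card_fin, nsmul_eq_mul]
    field_simp
    rw [div_eq_iff (by linarith)]
    ring
  rw [Finset.convexHull_eq]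
  refine ⟨wK d e, ?_, h1, ?_⟩
  · intro y hy
    rw [Kfin, Finset.mem_union] at hy
    rcases hy with hy | hy
    · obtain ⟨i, -, rfl⟩ := Finset.mem_image.mp hy
      rw [wK_apply_e d e hn i]
      have : (0:ℝ) ≤ (if (i:ℕ) < d then 1/(3*(n:ℝ)-d) else 0) := by
        split
        · positivity
        · exact le_refl 0
      have : (0:ℝ) < 2*(3*(n:ℝ)-2*d)/(3*(3*(n:ℝ)-d)) * (1/(2*(n:ℝ))) := by positivity
      linarith
    · rw [Finset.mem_singleton] at hy
      rw [hy, hwKsp]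
      positivity
  · rw [Finset.centerMass_eq_of_sum_1 _ id h1]
    simp only [id]
    apply e.repr.injective
    ext j
    rw [repr_Kcomb e hn (wK d e) j, repr_uu d e hn hd j, hwKsp, wK_apply_e d e hn j]
    ring

lemma memU_uu (hn : 0 < n) (hd : d ≤ n) :
    uu d e ∈ Submodule.span ℝ ((fun i => e i) '' {i | (i : ℕ) < d}) := by
  rw [memU_iff]
  intro j hj
  rw [repr_uu d e hn hd j, if_neg (by omega)]

lemma card_Lfin (hn : 0 < n) (hd : d ≤ n) : (Lfin d e).card = n - d + 1 := by
  classical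
  rw [Lfin, Finset.card_union_of_disjoint, Finset.card_image_of_injective, card_filter_ge d hd,
    Finset.card_singleton]
  · intro a b h
    exact e.injective (neg_injective h)
  · simp only [Finset.disjoint_singleton_right, Finset.mem_image]
    rintro ⟨i, -, h⟩
    exact sp_ne e hn i h.symm

lemma card_Kfin (hn : 0 < n) : (Kfin e).card = n + 1 := by
  classical
  rw [Kfin, Finset.card_union_of_disjoint, Finset.card_image_of_injective, Finset.card_univ,
    Fintype.card_fin, Finset.card_singleton]
  · exact e.injective
  · simp only [Finset.disjoint_singleton_right, Finset.mem_image]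
    rintro ⟨i, -, h⟩
    exact neg_sp_ne e hn i h.symm

lemma coe_Kfin : (↑(Kfin e) : Set (EuclideanSpace ℝ (Fin n)))
    = Set.range (fun i => e i) ∪ {-(1 / (2 * n : ℝ)) • ∑ i, e i} := by
  classical
  rw [Kfin, Finset.coe_union, Finset.coe_image, Finset.coe_univ, Set.image_univ,
    Finset.coe_singleton, sp, neg_smul]

lemma coe_Lfin : (↑(Lfin d e) : Set (EuclideanSpace ℝ (Fin n)))
    = (fun i => -e i) '' {i | d ≤ (i : ℕ)} ∪ {(1 / (2 * n : ℝ)) • ∑ i, e i} := by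
  classical
  rw [Lfin, Finset.coe_union, Finset.coe_image, Finset.coe_singleton, sp]
  congr 1
  congr 1
  ext i
  simp

end Stmt7Aux

theorem stmt_7 {n : ℕ} (hn : 0 < n) (d : ℕ) (hd : d ≤ n)
    (e : Module.Basis (Fin n) ℝ (EuclideanSpace ℝ (Fin n)))
    (U : Submodule ℝ (EuclideanSpace ℝ (Fin n)))
    (hU : U = Submodule.span ℝ ((fun i => e i) '' {i | (i : ℕ) < d}))
    (K L : Set (EuclideanSpace ℝ (Fin n)))
    (hK : K = Set.range (fun i => e i) ∪ {-(1 / (2 * n : ℝ)) • ∑ i, e i})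
    (hL : L = (fun i => -e i) '' {i | d ≤ (i : ℕ)} ∪ {(1 / (2 * n : ℝ)) • ∑ i, e i})
    (u : EuclideanSpace ℝ (Fin n))
    (hu : u = (1 / (3 * n - d : ℝ)) • ∑ i ∈ Finset.univ.filter (fun i : Fin n => (i : ℕ) < d), e i) :
    convexHull ℝ K ∩ convexHull ℝ L ∩ (U : Set (EuclideanSpace ℝ (Fin n))) = {u} ∧
      ∀ (K' L' : Finset (EuclideanSpace ℝ (Fin n))), ↑K' ⊆ K → ↑L' ⊆ L →
        K'.card + L'.card < 2 * (n + 1) - d →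
        convexHull ℝ (K' : Set (EuclideanSpace ℝ (Fin n))) ∩
          convexHull ℝ (L' : Set (EuclideanSpace ℝ (Fin n))) ∩
          (U : Set (EuclideanSpace ℝ (Fin n))) = ∅ := by
  classical
  open Stmt7Aux in
  have hK' : K = ↑(Kfin e) := by rw [hK, coe_Kfin]
  have hL' : L = ↑(Lfin d e) := by rw [hL, coe_Lfin]
  have hu' : u = Stmt7Aux.uu d e := by rw [hu]; rfl
  have hUiff : ∀ x, x ∈ U ↔ ∀ j : Fin n, d ≤ (j : ℕ) → e.repr x j = 0 := fun x => by
    rw [hU]; exact Stmt7Aux.memU_iff d e x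
  have extract : ∀ (T F : Finset (EuclideanSpace ℝ (Fin n))), T ⊆ F →
      ∀ x ∈ convexHull ℝ (↑T : Set (EuclideanSpace ℝ (Fin n))),
      ∃ w : EuclideanSpace ℝ (Fin n) → ℝ, (∀ y ∈ F, 0 ≤ w y) ∧ (∑ y ∈ F, w y = 1) ∧
        (∑ y ∈ F, w y • y = x) ∧ (∀ y ∈ F, y ∉ T → w y = 0) := by
    intro T F hsub x hx
    rw [Finset.convexHull_eq] at hx
    obtain ⟨w, hw0, hw1, hwx⟩ := hx
    rw [Finset.centerMass_eq_of_sum_1 _ id hw1] at hwx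
    simp only [id] at hwx
    have hinter : F ∩ T = T := Finset.inter_eq_right.2 hsub
    refine ⟨fun y => if y ∈ T then w y else 0, ?_, ?_, ?_, ?_⟩
    · intro y _; dsimp only; split
      · exact hw0 _ ‹_›
      · exact le_refl 0
    · rw [Finset.sum_ite_mem, hinter, hw1]
    · have hite : ∀ y : EuclideanSpace ℝ (Fin n),
          (if y ∈ T then w y else 0) • y = (if y ∈ T then w y • y else 0) := by
        intro y; split <;> simp
      calc ∑ y ∈ F, (fun y => if y ∈ T then w y else 0) y • y
          = ∑ y ∈ F, (if y ∈ T then w y • y else 0) :=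
            Finset.sum_congr rfl (fun y _ => hite y)
        _ = ∑ y ∈ F ∩ T, w y • y := Finset.sum_ite_mem _ _ _
        _ = x := by rw [hinter]; exact hwx
    · intro y _ hy; dsimp only; rw [if_neg hy]
  constructor
  · ext x
    simp only [Set.mem_inter_iff, Set.mem_singleton_iff, SetLike.mem_coe]
    constructor
    · rintro ⟨⟨hxK, hxL⟩, hxU⟩
      rw [hL'] at hxL
      obtain ⟨w, h0, h1, hcomb, -⟩ :=
        extract (Stmt7Aux.Lfin d e) (Stmt7Aux.Lfin d e) (le_refl _) x hxL
      have := (Stmt7Aux.keyL d e hn hd w x h0 h1 hcomb ((hUiff x).1 hxU)).1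
      rw [this, hu']
    · rintro rfl
      refine ⟨⟨?_, ?_⟩, ?_⟩
      · rw [hK', hu']; exact Stmt7Aux.memK d e hn hd
      · rw [hL', hu']; exact Stmt7Aux.memL d e hn hd
      · rw [hU, hu']; exact Stmt7Aux.memU_uu d e hn hd
  · intro K' L' hKs hLs hcard
    rw [Set.eq_empty_iff_forall_notMem]
    rintro x ⟨⟨hxK, hxL⟩, hxU⟩
    have hKf : K' ⊆ Stmt7Aux.Kfin e := by
      rw [← Finset.coe_subset]; rw [hK'] at hKs; exact hKs
    have hLf : L' ⊆ Stmt7Aux.Lfin d e := by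
      rw [← Finset.coe_subset]; rw [hL'] at hLs; exact hLs
    obtain ⟨wl, hl0, hl1, hlcomb, hlsupp⟩ :=
      extract L' (Stmt7Aux.Lfin d e) hLf x hxL
    obtain ⟨hxu, hlpos⟩ :=
      Stmt7Aux.keyL d e hn hd wl x hl0 hl1 hlcomb ((hUiff x).1 hxU)
    rw [hxu] at hxK
    obtain ⟨wk, hk0, hk1, hkcomb, hksupp⟩ :=
      extract K' (Stmt7Aux.Kfin e) hKf (Stmt7Aux.uu d e) hxK
    have hkpos := Stmt7Aux.keyK d e hn hd wk hk0 hk1 hkcomb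
    have hLeq : L' = Stmt7Aux.Lfin d e := by
      apply Finset.Subset.antisymm hLf
      intro y hy
      by_contra hnot
      exact absurd (hlsupp y hy hnot) (ne_of_gt (hlpos y hy))
    have hKeq : K' = Stmt7Aux.Kfin e := by
      apply Finset.Subset.antisymm hKf
      intro y hy
      by_contra hnot
      exact absurd (hksupp y hy hnot) (ne_of_gt (hkpos y hy))
    rw [hKeq, hLeq, Stmt7Aux.card_Kfin e hn, Stmt7Aux.card_Lfin d e hn hd] at hcard
    omega
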